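/- Let n ≥ 2 be an integer and C ∈ (0, π/2). Then ∫_C^{π/2} ((sin z / sin C)^{2(n−1)} − 1)^{−1/2} dz ≥ ((sin C)^{n−1} / √(2(n−1)·cos C)) · ∫_0^{π/2 − C} (sin z)^{−1/2} dz. -/

import Mathlib

open Real Set MeasureTheory intervalIntegral

set_option maxHeartbeats 1000000

private lemma pow_sub_pow_le_aux {s t : ℝ} (hs : 0 ≤ s) (hst : s ≤ t) (ht : t ≤ 1) :
    ∀ k : ℕ, t ^ k - s ^ k ≤ (k : ℝ) * (t - s) := by
  intro k
  induction k with
  | zero => simp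
  | succ k ih =>
    have h1 : 0 ≤ t ^ k - s ^ k := sub_nonneg.2 (pow_le_pow_left₀ hs hst k)
    have h2 : s ^ k ≤ 1 := pow_le_one₀ hs (hst.trans ht)
    have h3 : 0 ≤ s ^ k := pow_nonneg hs k
    have ht0 : 0 ≤ t := hs.trans hst
    have e : t ^ (k+1) - s ^ (k+1) = t * (t^k - s^k) + s^k * (t - s) := by ring
    push_cast
    nlinarith

theorem spherical_catenoid_halfperiod_integral_lower_bound
    (n : ℕ) (hn : 2 ≤ n) (C : ℝ) (hC : C ∈ Set.Ioo 0 (π / 2)) :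
    (∫ z in C..(π / 2),
        ((Real.sin z / Real.sin C) ^ (2 * (n - 1)) - 1) ^ (-(1 : ℝ) / 2))
      ≥ ((Real.sin C) ^ (n - 1) / Real.sqrt (2 * ((n : ℝ) - 1) * Real.cos C))
          * ∫ z in (0 : ℝ)..(π / 2 - C), (Real.sin z) ^ (-(1 : ℝ) / 2) := by
  obtain ⟨hC0, hC2⟩ := hC
  have hπ := pi_pos
  set m := n - 1 with hm
  have hm1 : 1 ≤ m := by omega
  have hmr : ((n : ℝ) - 1) = (m : ℝ) := by
    have : n = m + 1 := by omega
    rw [this]; push_cast; ring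
  have hmpos : (0:ℝ) < (m:ℝ) := by exact_mod_cast Nat.pos_of_ne_zero (by omega)
  have hsC : 0 < sin C := sin_pos_of_pos_of_lt_pi hC0 (by linarith)
  have hsC1 : sin C ≤ 1 := sin_le_one C
  have hcC : 0 < cos C := cos_pos_of_mem_Ioo ⟨by linarith, hC2⟩
  set c : ℝ := min (sin (2*C)) (cos C) with hcdef
  have hcpos : 0 < c :=
    lt_min (sin_pos_of_pos_of_lt_pi (by linarith) (by linarith)) hcC
  set A : ℝ := 2 * (m : ℝ) * cos C with hA
  have hApos : 0 < A := by positivity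
  rw [hmr]
  set f : ℝ → ℝ := fun z => ((sin z / sin C) ^ (2 * m) - 1) ^ (-(1:ℝ)/2) with hf
  set g0 : ℝ → ℝ := fun z => sin (z - C) ^ (-(1:ℝ)/2) with hg0
  set K : ℝ := sin C ^ m / Real.sqrt A with hK
  have hKpos : 0 < K := by
    apply div_pos (pow_pos hsC m) (Real.sqrt_pos.2 hApos)
  have hCle : C ≤ π / 2 := hC2.le
  -- basic facts on Icc
  have hsle : ∀ z ∈ Icc C (π/2), sin C ≤ sin z := fun z hz =>
    sin_le_sin_of_le_of_le_pi_div_two (by linarith [hz.1]) hz.2 hz.1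
  have hzC0 : ∀ z ∈ Icc C (π/2), 0 ≤ sin (z - C) := fun z hz =>
    sin_nonneg_of_nonneg_of_le_pi (by linarith [hz.1]) (by linarith [hz.2])
  -- upper bound on the base
  have hub : ∀ z ∈ Icc C (π/2),
      (sin z / sin C) ^ (2 * m) - 1 ≤ (A * sin (z - C)) / sin C ^ (2 * m) := by
    intro z hz
    have h1 : sin z - sin C ≤ cos C * sin (z - C) := by
      have e : sin z = sin (z - C) * cos C + cos (z - C) * sin C := by
        rw [← sin_add]; ring_nf
      nlinarith [cos_le_one (z - C), hsC.le, hzC0 z hz]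
    have h2 : sin z ^ (2*m) - sin C ^ (2*m) ≤ ((2*m : ℕ) : ℝ) * (sin z - sin C) :=
      pow_sub_pow_le_aux hsC.le (hsle z hz) (sin_le_one z) (2*m)
    have h3 : sin z ^ (2*m) - sin C ^ (2*m) ≤ A * sin (z - C) := by
      push_cast at h2
      nlinarith [hzC0 z hz]
    have hpow : (0:ℝ) < sin C ^ (2*m) := pow_pos hsC _
    have e : (sin z / sin C) ^ (2 * m) - 1
        = (sin z ^ (2*m) - sin C ^ (2*m)) / sin C ^ (2*m) := by
      rw [div_pow, sub_div, div_self hpow.ne']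
    rw [e]
    gcongr
  -- lower bound on the base
  have hlb : ∀ z ∈ Icc C (π/2),
      (c * sin (z - C)) / sin C ^ 2 ≤ (sin z / sin C) ^ (2 * m) - 1 := by
    intro z hz
    have h1 : 1 ≤ sin z / sin C := (one_le_div hsC).2 (hsle z hz)
    have h2 : (sin z / sin C) ^ 2 ≤ (sin z / sin C) ^ (2 * m) :=
      pow_le_pow_right₀ h1 (by omega)
    have hid : sin z ^ 2 - sin C ^ 2 = sin (z + C) * sin (z - C) := by
      rw [sin_add, sin_sub]
      linear_combination (sin C)^2 * (sin_sq_add_cos_sq z) - (sin z)^2 * (sin_sq_add_cos_sq C)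
    have hsum : c ≤ sin (z + C) := by
      rcases le_or_gt (z + C) (π/2) with h | h
      · exact le_trans (min_le_left _ _)
          (sin_le_sin_of_le_of_le_pi_div_two (by linarith [hz.1]) h (by linarith [hz.1]))
      · have : sin (z + C) = sin (π - (z + C)) := (Real.sin_pi_sub _).symm
        rw [this]
        calc c ≤ cos C := min_le_right _ _
          _ = sin (π/2 - C) := (Real.sin_pi_div_two_sub C).symm
          _ ≤ sin (π - (z + C)) := by
              apply sin_le_sin_of_le_of_le_pi_div_two (by linarith) (by linarith)
                (by linarith [hz.2])
    have h3 : c * sin (z - C) ≤ sin z ^ 2 - sin C ^ 2 := by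
      rw [hid]
      exact mul_le_mul_of_nonneg_right hsum (hzC0 z hz)
    have e : (sin z / sin C) ^ 2 - 1 = (sin z ^ 2 - sin C ^ 2) / sin C ^ 2 := by
      rw [div_pow, sub_div, div_self (pow_ne_zero 2 hsC.ne')]
    have h4 : (c * sin (z - C)) / sin C ^ 2 ≤ (sin z / sin C) ^ 2 - 1 := by
      rw [e]; gcongr
    linarith
  -- integrability of g0
  have hmeas_base : ∀ (h : ℝ → ℝ), ContinuousOn h (Ioc C (π/2)) →
      AEStronglyMeasurable h ((volume : Measure ℝ).restrict (Set.uIoc C (π/2))) := by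
    intro h hcont
    rw [uIoc_of_le hCle]
    exact hcont.aestronglyMeasurable measurableSet_Ioc
  have hg0pos : ∀ z ∈ Ioc C (π/2), 0 < sin (z - C) := fun z hz =>
    sin_pos_of_pos_of_lt_pi (by linarith [hz.1]) (by linarith [hz.2])
  have hg0cont : ContinuousOn g0 (Ioc C (π/2)) := by
    apply ContinuousOn.rpow_const
    · exact ((continuous_sin.comp (continuous_id.sub continuous_const))).continuousOn
    · intro x hx
      exact Or.inl (ne_of_gt (hg0pos x hx))
  have hg0int : IntervalIntegrable g0 volume C (π/2) := by
    have base : IntervalIntegrable (fun x : ℝ => x ^ (-(1:ℝ)/2)) volume 0 (π/2 - C) :=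
      intervalIntegral.intervalIntegrable_rpow' (by norm_num)
    have base2 : IntervalIntegrable (fun x : ℝ => (x - C) ^ (-(1:ℝ)/2)) volume C (π/2) := by
      have := base.comp_sub_right C
      simpa using this
    apply (base2.const_mul ((2/π) ^ (-(1:ℝ)/2))).mono_fun (hmeas_base g0 hg0cont)
    filter_upwards [MeasureTheory.ae_restrict_mem (by rw [uIoc_of_le hCle]; exact measurableSet_Ioc)]
      with x hx
    rw [uIoc_of_le hCle] at hx
    have hx1 : 0 < x - C := by linarith [hx.1]
    have hsinpos := hg0pos x hx
    have hkey : sin (x - C) ^ (-(1:ℝ)/2) ≤ (2/π * (x - C)) ^ (-(1:ℝ)/2) := by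
      apply Real.rpow_le_rpow_of_nonpos (by positivity)
        (Real.mul_le_sin hx1.le (by linarith [hx.2])) (by norm_num)
    have hmul : (2/π * (x - C)) ^ (-(1:ℝ)/2) = (2/π) ^ (-(1:ℝ)/2) * (x - C) ^ (-(1:ℝ)/2) :=
      Real.mul_rpow (by positivity) hx1.le
    simp only [Real.norm_eq_abs]
    rw [abs_of_nonneg (Real.rpow_nonneg hsinpos.le _),
        abs_of_nonneg (by positivity)]
    rw [hmul] at hkey
    exact hkey
  -- integrability of f
  have hfcont : ContinuousOn f (Ioc C (π/2)) := by
    apply ContinuousOn.rpow_const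
    · exact (((continuous_sin.div_const _).pow _).sub continuous_const).continuousOn
    · intro x hx
      have := hlb x (Ioc_subset_Icc_self hx)
      have : (0:ℝ) < (sin x / sin C) ^ (2*m) - 1 := by
        have h := hg0pos x hx
        have : (0:ℝ) < (c * sin (x - C)) / sin C ^ 2 := by positivity
        linarith [hlb x (Ioc_subset_Icc_self hx)]
      exact Or.inl (ne_of_gt this)
  have hfint : IntervalIntegrable f volume C (π/2) := by
    apply (hg0int.const_mul ((c / sin C ^ 2) ^ (-(1:ℝ)/2))).mono_fun (hmeas_base f hfcont)
    filter_upwards [MeasureTheory.ae_restrict_mem (by rw [uIoc_of_le hCle]; exact measurableSet_Ioc)]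
      with x hx
    rw [uIoc_of_le hCle] at hx
    have hsinpos := hg0pos x hx
    have hbpos : (0:ℝ) < (c * sin (x - C)) / sin C ^ 2 := by positivity
    have hbase : (0:ℝ) ≤ (sin x / sin C) ^ (2*m) - 1 := by
      linarith [hlb x (Ioc_subset_Icc_self hx)]
    have hkey : ((sin x / sin C) ^ (2*m) - 1) ^ (-(1:ℝ)/2)
        ≤ ((c * sin (x - C)) / sin C ^ 2) ^ (-(1:ℝ)/2) :=
      Real.rpow_le_rpow_of_nonpos hbpos (hlb x (Ioc_subset_Icc_self hx)) (by norm_num)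
    have hmul : ((c * sin (x - C)) / sin C ^ 2) ^ (-(1:ℝ)/2)
        = (c / sin C ^ 2) ^ (-(1:ℝ)/2) * sin (x - C) ^ (-(1:ℝ)/2) := by
      rw [show (c * sin (x - C)) / sin C ^ 2 = (c / sin C ^ 2) * sin (x - C) by ring]
      exact Real.mul_rpow (by positivity) hsinpos.le
    simp only [Real.norm_eq_abs]
    rw [abs_of_nonneg (Real.rpow_nonneg hbase _), abs_of_nonneg (by positivity)]
    rw [hmul] at hkey
    exact hkey
  -- the algebraic identity for the constant
  have hKeq : ∀ u : ℝ, 0 ≤ u →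
      ((A * u) / sin C ^ (2*m)) ^ (-(1:ℝ)/2) = K * u ^ (-(1:ℝ)/2) := by
    intro u hu
    rw [show (A * u) / sin C ^ (2*m) = (A / sin C ^ (2*m)) * u by ring,
        Real.mul_rpow (by positivity) hu]
    congr 1
    rw [neg_div, Real.rpow_neg (by positivity), ← Real.sqrt_eq_rpow,
        Real.sqrt_div hApos.le, inv_div, hK]
    congr 1
    rw [show 2 * m = m * 2 by ring, pow_mul, Real.sqrt_sq (pow_nonneg hsC.le m)]
  -- pointwise inequality on Icc
  have hpt : ∀ x ∈ Icc C (π/2), K * g0 x ≤ f x := by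
    intro x hx
    rcases eq_or_lt_of_le hx.1 with h | h
    · simp only [hf, hg0, ← h, sub_self, Real.sin_zero, div_self (ne_of_gt hsC), one_pow,
        Real.zero_rpow (by norm_num : (-(1:ℝ)/2) ≠ 0), mul_zero]
      exact le_rfl
    · have hx' : x ∈ Ioc C (π/2) := ⟨h, hx.2⟩
      have hsinpos := hg0pos x hx'
      have hbpos : (0:ℝ) < (sin x / sin C) ^ (2*m) - 1 := by
        have : (0:ℝ) < (c * sin (x - C)) / sin C ^ 2 := by positivity
        linarith [hlb x hx]
      have hkey : ((A * sin (x - C)) / sin C ^ (2*m)) ^ (-(1:ℝ)/2)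
          ≤ ((sin x / sin C) ^ (2*m) - 1) ^ (-(1:ℝ)/2) :=
        Real.rpow_le_rpow_of_nonpos hbpos (hub x hx) (by norm_num)
      rw [hKeq (sin (x - C)) hsinpos.le] at hkey
      exact hkey
  -- put it together
  have hrhs : (∫ z in (0:ℝ)..(π/2 - C), sin z ^ (-(1:ℝ)/2))
      = ∫ z in C..(π/2), g0 z := by
    have := intervalIntegral.integral_comp_sub_right (fun z => sin z ^ (-(1:ℝ)/2)) C
      (a := C) (b := π/2)
    rw [sub_self] at this
    exact this.symm
  rw [hrhs, ← intervalIntegral.integral_const_mul]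
  exact intervalIntegral.integral_mono_on hCle ((hg0int.const_mul K)) hfint hpt
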